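/- Let n ≥ 6 and let 𝒮₁ be a primitive nonpowerful signed digraph whose underlying digraph is F₁, in which all cycles of length n−1 have the same sign and all cycles of length n−2 have the same sign. Then l_{𝒮₁}(k) = l_{𝒮₁}(v_k) = 2n²−8n+8+k for every 1 ≤ k ≤ n. -/

import Mathlib

/-- `f : ℕ → V` traces a directed walk of length `t` in the digraph with
adjacency relation `A` if consecutive vertices are joined by arcs. -/
def IsWalk {V : Type*} (A : V → V → Prop) (t : ℕ) (f : ℕ → V) : Prop :=
  ∀ i < t, A (f i) (f (i + 1))

/-- There is a directed walk of length `t` from `u` to `v`. -/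
def HasWalk {V : Type*} (A : V → V → Prop) (t : ℕ) (u v : V) : Prop :=
  ∃ f : ℕ → V, f 0 = u ∧ f t = v ∧ IsWalk A t f

/-- A digraph is strongly connected if every vertex can reach every vertex. -/
def StronglyConnected {V : Type*} (A : V → V → Prop) : Prop :=
  ∀ u v : V, ∃ t : ℕ, HasWalk A t u v

/-- A digraph is primitive if it is strongly connected and for some `t > 0`
there are directed walks of length `t` between every ordered pair of vertices. -/
def IsPrimitive {V : Type*} (A : V → V → Prop) : Prop :=
  StronglyConnected A ∧ ∃ t : ℕ, 0 < t ∧ ∀ u v : V, HasWalk A t u v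

/-- The local exponent at `u`: the least `l` such that for every `t ≥ l` and
every vertex `v` there is a directed walk of length `t` from `u` to `v`. -/
noncomputable def localExp {V : Type*} (A : V → V → Prop) (u : V) : ℕ :=
  sInf {l : ℕ | ∀ t ≥ l, ∀ v : V, HasWalk A t u v}

/-- `kthSmallest f k` is the `k`-th smallest element (1-indexed) of the
multiset of values of `f`. -/
noncomputable def kthSmallest {n : ℕ} (f : Fin n → ℕ) (k : ℕ) : ℕ :=
  (Multiset.sort (Finset.univ.val.map f) (· ≤ ·)).getD (k - 1) 0

/-- A directed cycle of length `c` (a closed walk whose first `c` vertices are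
pairwise distinct), given by its vertex function. -/
def IsCycle {V : Type*} (A : V → V → Prop) (c : ℕ) (f : ℕ → V) : Prop :=
  IsWalk A c f ∧ f c = f 0 ∧ ∀ i < c, ∀ j < c, f i = f j → i = j

/-- A signed digraph: each arc carries a sign `+1` or `-1`. -/
structure SignedDigraph (V : Type*) where
  Adj : V → V → Prop
  sgn : V → V → ℤ
  sgn_unit : ∀ u v : V, Adj u v → sgn u v = 1 ∨ sgn u v = -1

namespace SignedDigraph

variable {V : Type*} (S : SignedDigraph V)

/-- The sign of the walk of length `t` traced by `f`. -/
def walkSign (t : ℕ) (f : ℕ → V) : ℤ :=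
  ∏ i ∈ Finset.range t, S.sgn (f i) (f (i + 1))

/-- There is a pair of SSSD walks of length `t` from `u` to `v`: two walks with
the same endpoints and the same length but different signs. -/
def HasSSSD (t : ℕ) (u v : V) : Prop :=
  ∃ f g : ℕ → V,
    (f 0 = u ∧ f t = v ∧ IsWalk S.Adj t f) ∧
    (g 0 = u ∧ g t = v ∧ IsWalk S.Adj t g) ∧
    S.walkSign t f ≠ S.walkSign t g

/-- A signed digraph is primitive and nonpowerful if from some length on there
are SSSD walk pairs between all ordered pairs of vertices. -/
def IsPrimitiveNonpowerful : Prop :=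
  ∃ l : ℕ, 0 < l ∧ ∀ t ≥ l, ∀ u v : V, S.HasSSSD t u v

/-- The local base at vertex `u`: the least `l` such that for every `t ≥ l` and
every vertex `v` there is a pair of SSSD walks of length `t` from `u` to `v`. -/
noncomputable def localBase (u : V) : ℕ :=
  sInf {l : ℕ | ∀ t ≥ l, ∀ v : V, S.HasSSSD t u v}

/-- All directed cycles of length `c` in `S` have the same sign. -/
def SameSignCycles (c : ℕ) : Prop :=
  ∀ f g : ℕ → V, IsCycle S.Adj c f → IsCycle S.Adj c g →
    S.walkSign c f = S.walkSign c g

end SignedDigraph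

/-- Isomorphism of digraphs. -/
def DigraphIso {V W : Type*} (A : V → V → Prop) (B : W → W → Prop) : Prop :=
  ∃ e : V ≃ W, ∀ u v : V, A u v ↔ B (e u) (e v)

/-- The Hamilton cycle `Cₙ` on `v₁,…,vₙ` (here `vⱼ` is the vertex with 0-based
index `j-1`), with arcs `v₁ → vₙ` and `vⱼ → v_{j-1}` for `2 ≤ j ≤ n`. -/
def CnAdj (n : ℕ) : Fin n → Fin n → Prop := fun a b =>
  (a.val = 0 ∧ b.val = n - 1) ∨ a.val = b.val + 1

/-- The digraph `D_{k,i}`: the Hamilton cycle `Cₙ` together with the arcs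
`vⱼ → v_{n-k+j-1}` for `1 ≤ j ≤ i`. -/
def DkiAdj (n k i : ℕ) : Fin n → Fin n → Prop := fun a b =>
  CnAdj n a b ∨ ∃ j : ℕ, 1 ≤ j ∧ j ≤ i ∧ a.val = j - 1 ∧ b.val = n - k + j - 2

/-- The digraph `𝓛`: `Cₙ` together with the arcs `v₁ → v_{n-2}` and `v₃ → vₙ`. -/
def LAdj (n : ℕ) : Fin n → Fin n → Prop := fun a b =>
  CnAdj n a b ∨ (a.val = 0 ∧ b.val = n - 3) ∨ (a.val = 2 ∧ b.val = n - 1)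

/-- The digraph `F`: the `(n-1)`-cycle `v₁ → vₙ → v_{n-1} → v_{n-3} → ⋯ → v₂ → v₁`
together with the arcs `v₁ → v_{n-2}` and `v_{n-2} → v_{n-3}`. -/
def FAdj (n : ℕ) : Fin n → Fin n → Prop := fun a b =>
  (a.val = 0 ∧ b.val = n - 1) ∨ (a.val = n - 1 ∧ b.val = n - 2) ∨
  (a.val = n - 2 ∧ b.val = n - 4) ∨ (a.val = b.val + 1 ∧ 1 ≤ a.val ∧ a.val ≤ n - 4) ∨
  (a.val = 0 ∧ b.val = n - 3) ∨ (a.val = n - 3 ∧ b.val = n - 4)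

/-- The digraph `F₁`: the `(n-1)`-cycle `v₁ → v_{n-1} → v_{n-2} → ⋯ → v₂ → v₁`
together with the arcs `v₁ → v_{n-2}`, `v₂ → vₙ` and `vₙ → v_{n-1}`. -/
def F1Adj (n : ℕ) : Fin n → Fin n → Prop := fun a b =>
  (a.val = 0 ∧ b.val = n - 2) ∨ (a.val = b.val + 1 ∧ 1 ≤ a.val ∧ a.val ≤ n - 2) ∨
  (a.val = 0 ∧ b.val = n - 3) ∨ (a.val = 1 ∧ b.val = n - 1) ∨ (a.val = n - 1 ∧ b.val = n - 2)

/-- The digraph `F₂`: the `(n-1)`-cycle `v₁ → vₙ → v_{n-2} → v_{n-3} → ⋯ → v₂ → v₁`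
together with the arcs `v₁ → v_{n-2}`, `vₙ → v_{n-1}` and `v_{n-1} → v_{n-3}`. -/
def F2Adj (n : ℕ) : Fin n → Fin n → Prop := fun a b =>
  (a.val = 0 ∧ b.val = n - 1) ∨ (a.val = n - 1 ∧ b.val = n - 3) ∨
  (a.val = b.val + 1 ∧ 1 ≤ a.val ∧ a.val ≤ n - 3) ∨
  (a.val = 0 ∧ b.val = n - 3) ∨ (a.val = n - 1 ∧ b.val = n - 2) ∨ (a.val = n - 2 ∧ b.val = n - 4)

/-- The digraph `F₃`: the `(n-2)`-cycle `v₁ → v_{n-2} → v_{n-3} → ⋯ → v₂ → v₁`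
together with the arcs `v₁ → v_{n-1}`, `v_{n-1} → v_{n-2}`, `v₁ → vₙ` and `vₙ → v_{n-2}`. -/
def F3Adj (n : ℕ) : Fin n → Fin n → Prop := fun a b =>
  (a.val = 0 ∧ b.val = n - 3) ∨ (a.val = b.val + 1 ∧ 1 ≤ a.val ∧ a.val ≤ n - 3) ∨
  (a.val = 0 ∧ b.val = n - 2) ∨ (a.val = n - 2 ∧ b.val = n - 3) ∨
  (a.val = 0 ∧ b.val = n - 1) ∨ (a.val = n - 1 ∧ b.val = n - 3)

/-- The digraph `F₇`: the `(n-1)`-cycle `v₁ → v_{n-1} → v_{n-2} → ⋯ → v₂ → v₁`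
together with the arcs `v₁ → v_{n-2}`, `v₃ → vₙ` and `vₙ → v_{n-1}`. -/
def F7Adj (n : ℕ) : Fin n → Fin n → Prop := fun a b =>
  (a.val = 0 ∧ b.val = n - 2) ∨ (a.val = b.val + 1 ∧ 1 ≤ a.val ∧ a.val ≤ n - 2) ∨
  (a.val = 0 ∧ b.val = n - 3) ∨ (a.val = 2 ∧ b.val = n - 1) ∨ (a.val = n - 1 ∧ b.val = n - 2)

/-- The digraph `F'ᵢ` (for `2 ≤ i ≤ n-3`): the `(n-1)`-cycle
`v₁ → v_{n-1} → v_{n-2} → ⋯ → v₂ → v₁` together with the arcs `v₁ → v_{n-2}`,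
`v_{i+1} → vₙ` and `vₙ → v_{i-1}`. -/
def FpAdj (n i : ℕ) : Fin n → Fin n → Prop := fun a b =>
  (a.val = 0 ∧ b.val = n - 2) ∨ (a.val = b.val + 1 ∧ 1 ≤ a.val ∧ a.val ≤ n - 2) ∨
  (a.val = 0 ∧ b.val = n - 3) ∨ (a.val = i ∧ b.val = n - 1) ∨ (a.val = n - 1 ∧ b.val = i - 2)

/-- The digraph `𝓑₁`: `Cₙ` together with the arcs `v₁ → v_{n-3}` and `v₃ → v_{n-1}`. -/
def B1Adj (n : ℕ) : Fin n → Fin n → Prop := fun a b =>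
  CnAdj n a b ∨ (a.val = 0 ∧ b.val = n - 4) ∨ (a.val = 2 ∧ b.val = n - 2)

/-- The digraph `𝓑₂`: `Cₙ` together with the arcs `v₁ → v_{n-3}` and `v₄ → vₙ`. -/
def B2Adj (n : ℕ) : Fin n → Fin n → Prop := fun a b =>
  CnAdj n a b ∨ (a.val = 0 ∧ b.val = n - 4) ∨ (a.val = 3 ∧ b.val = n - 1)

/-- The digraph `𝓑₃`: `Cₙ` together with the arcs `v₁ → v_{n-3}`, `v₂ → v_{n-2}`
and `v₄ → vₙ`. -/
def B3Adj (n : ℕ) : Fin n → Fin n → Prop := fun a b =>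
  CnAdj n a b ∨ (a.val = 0 ∧ b.val = n - 4) ∨ (a.val = 1 ∧ b.val = n - 3) ∨
  (a.val = 3 ∧ b.val = n - 1)

/-- The digraph `𝓑₄`: `Cₙ` together with the arcs `v₁ → v_{n-3}`, `v₃ → v_{n-1}`
and `v₄ → vₙ`. -/
def B4Adj (n : ℕ) : Fin n → Fin n → Prop := fun a b =>
  CnAdj n a b ∨ (a.val = 0 ∧ b.val = n - 4) ∨ (a.val = 2 ∧ b.val = n - 2) ∨
  (a.val = 3 ∧ b.val = n - 1)

/-! ### Auxiliary machinery for the proof of `stmt5` -/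

namespace Stmt5Aux

open SignedDigraph

section Generic

variable {V : Type*} (S : SignedDigraph V)

/-- A signed walk with prescribed sign. -/
def HasSW (t : ℕ) (u v : V) (σ : ℤ) : Prop :=
  ∃ f : ℕ → V, f 0 = u ∧ f t = v ∧ IsWalk S.Adj t f ∧ S.walkSign t f = σ

lemma hasSW_refl (u : V) : HasSW S 0 u u 1 :=
  ⟨fun _ => u, rfl, rfl, fun i hi => absurd hi (by omega), by simp [walkSign]⟩

lemma hasSW_arc {u v : V} (h : S.Adj u v) : HasSW S 1 u v (S.sgn u v) := by
  refine ⟨fun i => if i = 0 then u else v, by simp, by simp, ?_, ?_⟩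
  · intro i hi
    have : i = 0 := by omega
    subst this; simpa using h
  · simp [walkSign]


lemma hasSW_concat {t₁ t₂ : ℕ} {u w v : V} {σ τ : ℤ}
    (h₁ : HasSW S t₁ u w σ) (h₂ : HasSW S t₂ w v τ) :
    HasSW S (t₁ + t₂) u v (σ * τ) := by
  obtain ⟨f, hf0, hft, hfw, hfs⟩ := h₁
  obtain ⟨g, hg0, hgt, hgw, hgs⟩ := h₂
  set F : ℕ → V := fun i => if i < t₁ then f i else g (i - t₁) with hF
  have hle : ∀ i ≤ t₁, F i = f i := by
    intro i hi
    rcases lt_or_eq_of_le hi with h | h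
    · simp [hF, h]
    · subst h; simp [hF, hg0, ← hft]
  have hsh : ∀ i, F (t₁ + i) = g i := by
    intro i; simp [hF, show ¬ (t₁ + i < t₁) by omega]
  refine ⟨F, by rw [hle 0 (by omega), hf0], by rw [hsh t₂, hgt], ?_, ?_⟩
  · intro i hi
    by_cases h : i < t₁
    · rw [hle i (by omega), hle (i+1) (by omega)]; exact hfw i h
    · obtain ⟨j, rfl⟩ : ∃ j, i = t₁ + j := ⟨i - t₁, by omega⟩
      rw [hsh j, show t₁ + j + 1 = t₁ + (j+1) by omega, hsh (j+1)]
      exact hgw j (by omega)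
  · unfold SignedDigraph.walkSign
    rw [Finset.prod_range_add]
    have e1 : (∏ i ∈ Finset.range t₁, S.sgn (F i) (F (i+1)))
        = ∏ i ∈ Finset.range t₁, S.sgn (f i) (f (i+1)) := by
      refine Finset.prod_congr rfl fun i hi => ?_
      simp only [Finset.mem_range] at hi
      rw [hle i (by omega), hle (i+1) (by omega)]
    have e2 : (∏ i ∈ Finset.range t₂, S.sgn (F (t₁ + i)) (F (t₁ + i + 1)))
        = ∏ i ∈ Finset.range t₂, S.sgn (g i) (g (i+1)) := by
      refine Finset.prod_congr rfl fun i hi => ?_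
      rw [hsh i, show t₁ + i + 1 = t₁ + (i+1) by omega, hsh (i+1)]
    rw [e1, e2, ← hfs, ← hgs]; rfl

lemma hasSW_pow {c : ℕ} {u : V} {σ : ℤ} (h : HasSW S c u u σ) (a : ℕ) :
    HasSW S (a * c) u u (σ ^ a) := by
  induction a with
  | zero => simpa using hasSW_refl S u
  | succ a ih =>
      have := hasSW_concat S ih h
      rw [show a * c + c = (a+1) * c by ring] at this
      rw [pow_succ]
      exact this

lemma hasSSSD_of_two {t : ℕ} {u v : V} {σ τ : ℤ}
    (h₁ : HasSW S t u v σ) (h₂ : HasSW S t u v τ) (hne : σ ≠ τ) :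
    S.HasSSSD t u v := by
  obtain ⟨f, hf0, hft, hfw, hfs⟩ := h₁
  obtain ⟨g, hg0, hgt, hgw, hgs⟩ := h₂
  exact ⟨f, g, ⟨hf0, hft, hfw⟩, ⟨hg0, hgt, hgw⟩, by rw [hfs, hgs]; exact hne⟩

lemma walkSign_succ (t : ℕ) (f : ℕ → V) :
    S.walkSign (t+1) f = S.walkSign t f * S.sgn (f t) (f (t+1)) := by
  unfold SignedDigraph.walkSign
  exact Finset.prod_range_succ _ _

end Generic

section F1

variable {n : ℕ} (S : SignedDigraph (Fin n))

/-- sign of the descending arc `k → k-1` (for `1 ≤ k ≤ n-2`). -/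
def xa (k : ℕ) : ℤ :=
  if h : 1 ≤ k ∧ k + 2 ≤ n then S.sgn ⟨k, by omega⟩ ⟨k - 1, by omega⟩ else 1

/-- product `x₁ ⋯ x_j`. -/
def Rr (j : ℕ) : ℤ := ∏ i ∈ Finset.range j, xa S (i + 1)

def ya : ℤ := if h : 0 < n then S.sgn ⟨0, h⟩ ⟨n - 2, by omega⟩ else 1
def za : ℤ := if h : 0 < n then S.sgn ⟨0, h⟩ ⟨n - 3, by omega⟩ else 1
def pa : ℤ := if h : 1 < n then S.sgn ⟨1, h⟩ ⟨n - 1, by omega⟩ else 1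
def qa : ℤ := if h : 0 < n then S.sgn ⟨n - 1, by omega⟩ ⟨n - 2, by omega⟩ else 1

/-- sign of the `(n-1)`-cycle through `0`. -/
def s1v : ℤ := ya S * Rr S (n - 2)
/-- sign of the `(n-2)`-cycle through `0`. -/
def s2v : ℤ := za S * Rr S (n - 3)

/-- the sign gauge. -/
def gg (v : Fin n) : ℤ :=
  if v.val = 0 then 1
  else if v.val = n - 1 then pa S * (ya S * Rr S (n - 2) * Rr S 1) * s1v S
  else ya S * Rr S (n - 2) * Rr S v.val

/-- the position potential. -/
def pf (v : Fin n) : ℕ :=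
  if v.val = 0 ∨ v.val = n - 1 then 0 else n - 1 - v.val

variable {m : ℕ} (hadj : S.Adj = F1Adj n) (hn : n = m + 6)

section Units
include hadj hn

lemma xa_unit (k : ℕ) : xa S k * xa S k = 1 := by
  unfold xa
  split
  · rename_i h
    have hA : S.Adj ⟨k, by omega⟩ ⟨k - 1, by omega⟩ := by
      rw [hadj]
      refine Or.inr (Or.inl ⟨?_, ?_, ?_⟩) <;> simp <;> omega
    rcases S.sgn_unit _ _ hA with h' | h' <;> rw [h'] <;> norm_num
  · norm_num

lemma Rr_unit (j : ℕ) : Rr S j * Rr S j = 1 := by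
  unfold Rr
  rw [← Finset.prod_mul_distrib]
  exact Finset.prod_eq_one fun i _ => xa_unit S hadj hn (i + 1)

lemma ya_unit : ya S * ya S = 1 := by
  unfold ya
  rw [dif_pos (show 0 < n by omega)]
  have hA : S.Adj ⟨0, by omega⟩ ⟨n - 2, by omega⟩ := by rw [hadj]; exact Or.inl ⟨rfl, rfl⟩
  rcases S.sgn_unit _ _ hA with h' | h' <;> rw [h'] <;> norm_num

lemma za_unit : za S * za S = 1 := by
  unfold za
  rw [dif_pos (show 0 < n by omega)]
  have hA : S.Adj ⟨0, by omega⟩ ⟨n - 3, by omega⟩ := by rw [hadj]; exact Or.inr (Or.inr (Or.inl ⟨rfl, rfl⟩))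
  rcases S.sgn_unit _ _ hA with h' | h' <;> rw [h'] <;> norm_num

lemma pa_unit : pa S * pa S = 1 := by
  unfold pa
  rw [dif_pos (show 1 < n by omega)]
  have hA : S.Adj ⟨1, by omega⟩ ⟨n - 1, by omega⟩ := by rw [hadj]; exact Or.inr (Or.inr (Or.inr (Or.inl ⟨rfl, rfl⟩)))
  rcases S.sgn_unit _ _ hA with h' | h' <;> rw [h'] <;> norm_num

lemma qa_unit : qa S * qa S = 1 := by
  unfold qa
  rw [dif_pos (show 0 < n by omega)]
  have hA : S.Adj ⟨n - 1, by omega⟩ ⟨n - 2, by omega⟩ := by rw [hadj]; exact Or.inr (Or.inr (Or.inr (Or.inr ⟨rfl, rfl⟩)))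
  rcases S.sgn_unit _ _ hA with h' | h' <;> rw [h'] <;> norm_num

lemma s1v_unit : s1v S * s1v S = 1 := by
  have h1 := ya_unit S hadj hn
  have h2 := Rr_unit S hadj hn (n - 2)
  unfold s1v; linear_combination (Rr S (n-2) * Rr S (n-2)) * h1 + h2

lemma s2v_unit : s2v S * s2v S = 1 := by
  have h1 := za_unit S hadj hn
  have h2 := Rr_unit S hadj hn (n - 3)
  unfold s2v; linear_combination (Rr S (n-3) * Rr S (n-3)) * h1 + h2

lemma gg_unit (v : Fin n) : gg S v * gg S v = 1 := by
  have hy := ya_unit S hadj hn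
  have hp := pa_unit S hadj hn
  have hs := s1v_unit S hadj hn
  have h2 := Rr_unit S hadj hn (n - 2)
  have h1 := Rr_unit S hadj hn 1
  have hv := Rr_unit S hadj hn v.val
  unfold gg
  split
  · norm_num
  · split
    · linear_combination (ya S * ya S * Rr S (n-2) * Rr S (n-2) * Rr S 1 * Rr S 1 * s1v S * s1v S) * hp
        + (Rr S (n-2) * Rr S (n-2) * Rr S 1 * Rr S 1 * s1v S * s1v S) * hy
        + (Rr S 1 * Rr S 1 * s1v S * s1v S) * h2 + (s1v S * s1v S) * h1 + hs
    · linear_combination (Rr S (n-2) * Rr S (n-2) * Rr S ↑v * Rr S ↑v) * hy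
        + (Rr S ↑v * Rr S ↑v) * h2 + hv

end Units

end F1
section F1b

variable {n m : ℕ} (S : SignedDigraph (Fin n)) (hadj : S.Adj = F1Adj n) (hn : n = m + 6)

lemma Rr_succ (j : ℕ) : Rr S (j + 1) = Rr S j * xa S (j + 1) :=
  Finset.prod_range_succ _ _

lemma Rr_one : Rr S 1 = xa S 1 := by
  unfold Rr; exact Finset.prod_range_one _

include hn

lemma gg_at0 (u : Fin n) (hu : u.val = 0) : gg S u = 1 := by
  unfold gg; rw [if_pos hu]

lemma gg_atn1 (u : Fin n) (hu : u.val = n - 1) :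
    gg S u = pa S * (ya S * Rr S (n - 2) * Rr S 1) * s1v S := by
  unfold gg; rw [if_neg (by omega), if_pos hu]

lemma gg_mid (u : Fin n) (h1 : 1 ≤ u.val) (h2 : u.val ≤ n - 2) :
    gg S u = ya S * Rr S (n - 2) * Rr S u.val := by
  unfold gg; rw [if_neg (by omega), if_neg (by omega)]

lemma pf_at0 (u : Fin n) (hu : u.val = 0 ∨ u.val = n - 1) : pf u = 0 := by
  unfold pf; rw [if_pos hu]

lemma pf_mid (u : Fin n) (h1 : 1 ≤ u.val) (h2 : u.val ≤ n - 2) :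
    pf u = n - 1 - u.val := by
  unfold pf; rw [if_neg (by omega)]

lemma sgn_eq_ya (u w : Fin n) (hu : u.val = 0) (hw : w.val = n - 2) :
    S.sgn u w = ya S := by
  unfold ya; rw [dif_pos (show 0 < n by omega)]
  congr 1 <;> apply Fin.ext <;> simpa

lemma sgn_eq_za (u w : Fin n) (hu : u.val = 0) (hw : w.val = n - 3) :
    S.sgn u w = za S := by
  unfold za; rw [dif_pos (show 0 < n by omega)]
  congr 1 <;> apply Fin.ext <;> simpa

lemma sgn_eq_pa (u w : Fin n) (hu : u.val = 1) (hw : w.val = n - 1) :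
    S.sgn u w = pa S := by
  unfold pa; rw [dif_pos (show 1 < n by omega)]
  congr 1 <;> apply Fin.ext <;> simpa

lemma sgn_eq_qa (u w : Fin n) (hu : u.val = n - 1) (hw : w.val = n - 2) :
    S.sgn u w = qa S := by
  unfold qa; rw [dif_pos (show 0 < n by omega)]
  congr 1 <;> apply Fin.ext <;> simpa

lemma sgn_eq_xa (k : ℕ) (u w : Fin n) (h1 : 1 ≤ k) (h2 : k + 2 ≤ n)
    (hu : u.val = k) (hw : w.val = k - 1) : S.sgn u w = xa S k := by
  unfold xa; rw [dif_pos ⟨h1, h2⟩]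
  congr 1 <;> apply Fin.ext <;> simpa

include hadj

/-- arc `0 → n-2`. -/
lemma arcsgn_0n2 (u w : Fin n) (hu : u.val = 0) (hw : w.val = n - 2) :
    S.sgn u w = gg S u * gg S w := by
  rw [sgn_eq_ya S hn u w hu hw, gg_at0 S hn u hu, gg_mid S hn w (by omega) (by omega), hw]
  rw [show (1 : ℤ) * (ya S * Rr S (n-2) * Rr S (n-2)) =
      ya S * (Rr S (n-2) * Rr S (n-2)) from by ring, Rr_unit S hadj hn]
  ring

/-- arc `0 → n-3` (the shortcut). -/
lemma arcsgn_sc (u w : Fin n) (hu : u.val = 0) (hw : w.val = n - 3) :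
    S.sgn u w = gg S u * gg S w * (s1v S * s2v S) := by
  rw [sgn_eq_za S hn u w hu hw, gg_at0 S hn u hu, gg_mid S hn w (by omega) (by omega), hw]
  unfold s1v s2v
  rw [show (1:ℤ) * (ya S * Rr S (n-2) * Rr S (n-3)) * (ya S * Rr S (n-2) * (za S * Rr S (n-3)))
      = za S * ((ya S * ya S) * ((Rr S (n-2) * Rr S (n-2)) * (Rr S (n-3) * Rr S (n-3)))) from by
        ring,
    ya_unit S hadj hn, Rr_unit S hadj hn, Rr_unit S hadj hn]
  ring

/-- arc `1 → 0` (a wrap arc). -/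
lemma arcsgn_10 (u w : Fin n) (hu : u.val = 1) (hw : w.val = 0) :
    S.sgn u w = gg S u * gg S w * s1v S := by
  rw [sgn_eq_xa S hn 1 u w (by omega) (by omega) hu (by omega),
    gg_at0 S hn w hw, gg_mid S hn u (by omega) (by omega), hu]
  unfold s1v
  rw [Rr_one, show ya S * Rr S (n-2) * xa S 1 * 1 * (ya S * Rr S (n-2))
      = xa S 1 * ((ya S * ya S) * (Rr S (n-2) * Rr S (n-2))) from by ring,
    ya_unit S hadj hn, Rr_unit S hadj hn]
  ring

/-- arc `1 → n-1` (a wrap arc). -/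
lemma arcsgn_1n1 (u w : Fin n) (hu : u.val = 1) (hw : w.val = n - 1) :
    S.sgn u w = gg S u * gg S w * s1v S := by
  rw [sgn_eq_pa S hn u w hu hw, gg_atn1 S hn w hw, gg_mid S hn u (by omega) (by omega), hu]
  rw [show ya S * Rr S (n-2) * Rr S 1 * (pa S * (ya S * Rr S (n-2) * Rr S 1) * s1v S) * s1v S
      = pa S * ((ya S * ya S) * ((Rr S (n-2) * Rr S (n-2)) * ((Rr S 1 * Rr S 1) *
        (s1v S * s1v S)))) from by ring,
    ya_unit S hadj hn, Rr_unit S hadj hn, Rr_unit S hadj hn, s1v_unit S hadj hn]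
  ring

/-- descending arc `j+1 → j`, `1 ≤ j`. -/
lemma arcsgn_desc (j : ℕ) (u w : Fin n) (h1 : 1 ≤ j) (h2 : j + 3 ≤ n)
    (hu : u.val = j + 1) (hw : w.val = j) :
    S.sgn u w = gg S u * gg S w := by
  rw [sgn_eq_xa S hn (j+1) u w (by omega) (by omega) hu (by omega),
    gg_mid S hn u (by omega) (by omega), gg_mid S hn w (by omega) (by omega), hu, hw, Rr_succ]
  rw [show ya S * Rr S (n-2) * (Rr S j * xa S (j+1)) * (ya S * Rr S (n-2) * Rr S j)
      = xa S (j+1) * ((ya S * ya S) * ((Rr S (n-2) * Rr S (n-2)) * (Rr S j * Rr S j)))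
      from by ring,
    ya_unit S hadj hn, Rr_unit S hadj hn, Rr_unit S hadj hn]
  ring

/-- arc `n-1 → n-2`, given the key relation coming from `h1`. -/
lemma arcsgn_n1n2 (hRel : pa S * qa S = ya S * xa S 1) (u w : Fin n)
    (hu : u.val = n - 1) (hw : w.val = n - 2) :
    S.sgn u w = gg S u * gg S w := by
  rw [sgn_eq_qa S hn u w hu hw, gg_atn1 S hn u hu, gg_mid S hn w (by omega) (by omega), hw]
  unfold s1v
  rw [Rr_one, show pa S * (ya S * Rr S (n-2) * xa S 1) * (ya S * Rr S (n-2)) *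
      (ya S * Rr S (n-2) * Rr S (n-2))
      = (pa S * (ya S * xa S 1)) * ((ya S * ya S) * ((Rr S (n-2) * Rr S (n-2)) *
        (Rr S (n-2) * Rr S (n-2)))) from by ring,
    ya_unit S hadj hn, Rr_unit S hadj hn, ← hRel]
  rw [show pa S * (pa S * qa S) * (1 * (1 * 1)) = qa S * (pa S * pa S) from by ring,
    pa_unit S hadj hn]
  ring

end F1b
section Rel

variable {n m : ℕ} (S : SignedDigraph (Fin n)) (hadj : S.Adj = F1Adj n) (hn : n = m + 6)

include hadj hn

lemma key_relation (h1 : S.SameSignCycles (n - 1)) : pa S * qa S = ya S * xa S 1 := by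
  -- the cycle C' : 0 → n-2 → n-3 → ⋯ → 1 → 0
  set f : ℕ → Fin n := fun i => ⟨if i = 0 ∨ n - 1 ≤ i then 0 else n - 1 - i, by split <;> omega⟩
    with hf
  have hfv : ∀ i, (f i).val = if i = 0 ∨ n - 1 ≤ i then 0 else n - 1 - i := fun i => rfl
  have hcyc1 : IsCycle S.Adj (n - 1) f := by
    refine ⟨?_, ?_, ?_⟩
    · intro i hi
      rw [hadj]
      rcases Nat.eq_zero_or_pos i with h0 | h0
      · subst h0
        have e1 : (f 0).val = 0 := by rw [hfv]; simp
        have e2 : (f (0+1)).val = n - 2 := by rw [hfv]; rw [if_neg (by omega)]; omega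
        exact Or.inl ⟨e1, by omega⟩
      · have e1 : (f i).val = n - 1 - i := by rw [hfv]; rw [if_neg (by omega)]
        have e2 : (f (i+1)).val = n - 2 - i := by rw [hfv]; split <;> omega
        exact Or.inr (Or.inl ⟨by omega, by omega, by omega⟩)
    · apply Fin.ext; rw [hfv, hfv]; simp [show n - 1 ≤ n - 1 by omega]
    · intro i hi j hj hij
      have := congrArg Fin.val hij
      rw [hfv, hfv] at this
      split at this <;> split at this <;> omega
  -- the cycle C'' : 1 → n-1 → n-2 → ⋯ → 2 → 1
  set g : ℕ → Fin n := fun i =>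
      ⟨if i = 0 ∨ n - 1 ≤ i then 1 else if i = 1 then n - 1 else n - i,
        by split; omega; split <;> omega⟩
    with hg
  have hgv : ∀ i, (g i).val = if i = 0 ∨ n - 1 ≤ i then 1 else if i = 1 then n - 1 else n - i :=
    fun i => rfl
  have hcyc2 : IsCycle S.Adj (n - 1) g := by
    refine ⟨?_, ?_, ?_⟩
    · intro i hi
      rw [hadj]
      rcases Nat.eq_zero_or_pos i with h0 | h0
      · subst h0
        have e1 : (g 0).val = 1 := by rw [hgv]; simp
        have e2 : (g (0+1)).val = n - 1 := by
          rw [hgv]; rw [if_neg (by omega), if_pos rfl]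
        exact Or.inr (Or.inr (Or.inr (Or.inl ⟨e1, e2⟩)))
      · rcases Nat.eq_or_lt_of_le h0 with h1' | h1'
        · have e1 : (g i).val = n - 1 := by
            rw [hgv]; rw [if_neg (by omega), if_pos (by omega)]
          have e2 : (g (i+1)).val = n - 2 := by
            rw [hgv]; rw [if_neg (by omega), if_neg (by omega)]
            omega
          exact Or.inr (Or.inr (Or.inr (Or.inr ⟨e1, e2⟩)))
        · have e1 : (g i).val = n - i := by
            rw [hgv]; rw [if_neg (by omega), if_neg (by omega)]
          have e2 : (g (i+1)).val = n - i - 1 := by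
            rw [hgv]; split
            · omega
            · rw [if_neg (by omega)]; omega
          exact Or.inr (Or.inl ⟨by omega, by omega, by omega⟩)
    · apply Fin.ext; rw [hgv, hgv]; simp [show n - 1 ≤ n - 1 by omega]
    · intro i hi j hj hij
      have := congrArg Fin.val hij
      rw [hgv, hgv] at this
      split at this <;> split at this <;> (try split at this) <;> (try split at this) <;> omega
  -- compute the two walk signs
  set T : ℤ := ∏ i ∈ Finset.range (n-3), xa S (i+2) with hTdef
  have hT : T * T = 1 := by
    rw [hTdef, ← Finset.prod_mul_distrib]
    exact Finset.prod_eq_one fun i _ => xa_unit S hadj hn (i + 2)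
  have hRt : Rr S (n-2) = T * xa S 1 := by
    unfold Rr
    rw [show n - 2 = (n - 3) + 1 from by omega, Finset.prod_range_succ']
  have hsf : S.walkSign (n - 1) f = ya S * Rr S (n - 2) := by
    unfold SignedDigraph.walkSign
    rw [show n - 1 = (n - 2) + 1 from by omega, Finset.prod_range_succ']
    have h0 : S.sgn (f 0) (f (0+1)) = ya S := by
      refine sgn_eq_ya S hn _ _ (by rw [hfv]; simp) ?_
      rw [hfv]; rw [if_neg (by omega)]; omega
    have hmid : ∀ i ∈ Finset.range (n-2), S.sgn (f (i+1)) (f (i+1+1)) = xa S (n-2-i) := by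
      intro i hi; simp only [Finset.mem_range] at hi
      refine sgn_eq_xa S hn (n-2-i) _ _ (by omega) (by omega) ?_ ?_
      · rw [hfv]; rw [if_neg (by omega)]; omega
      · rw [hfv]; split <;> omega
    rw [Finset.prod_congr rfl hmid, h0]
    rw [mul_comm]; congr 1
    unfold Rr
    rw [← Finset.prod_range_reflect (fun j => xa S (j+1)) (n-2)]
    refine Finset.prod_congr rfl fun i hi => ?_
    simp only [Finset.mem_range] at hi
    congr 1; omega
  have hsg : S.walkSign (n - 1) g = pa S * qa S * T := by
    unfold SignedDigraph.walkSign
    rw [show n - 1 = ((n - 3) + 1) + 1 from by omega, Finset.prod_range_succ',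
      Finset.prod_range_succ']
    have h0 : S.sgn (g 0) (g (0+1)) = pa S := by
      refine sgn_eq_pa S hn _ _ (by rw [hgv]; simp) ?_
      rw [hgv]; rw [if_neg (by omega), if_pos rfl]
    have h1' : S.sgn (g (0+1)) (g (0+1+1)) = qa S := by
      refine sgn_eq_qa S hn _ _ ?_ ?_
      · rw [hgv]; rw [if_neg (by omega), if_pos rfl]
      · rw [hgv]; rw [if_neg (by omega), if_neg (by omega)]; try omega
    have hmid : ∀ i ∈ Finset.range (n-3),
        S.sgn (g (i+1+1)) (g (i+1+1+1)) = xa S (n-2-i) := by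
      intro i hi; simp only [Finset.mem_range] at hi
      refine sgn_eq_xa S hn (n-2-i) _ _ (by omega) (by omega) ?_ ?_
      · rw [hgv]; rw [if_neg (by omega), if_neg (by omega)]; omega
      · rw [hgv]; split
        · omega
        · rw [if_neg (by omega)]; omega
    rw [Finset.prod_congr rfl hmid, h0, h1']
    rw [show (∏ i ∈ Finset.range (n-3), xa S (n-2-i)) * qa S * pa S
        = pa S * qa S * ∏ i ∈ Finset.range (n-3), xa S (n-2-i) from by ring]
    congr 1
    rw [hTdef, ← Finset.prod_range_reflect (fun j => xa S (j+2)) (n-3)]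
    refine Finset.prod_congr rfl fun i hi => ?_
    simp only [Finset.mem_range] at hi
    congr 1; omega
  have hEq : ya S * Rr S (n-2) = pa S * qa S * T := by
    rw [← hsf, ← hsg]; exact h1 f g hcyc1 hcyc2
  linear_combination (ya S * xa S 1 - pa S * qa S) * hT + (- T) * hEq + (ya S * T) * hRt

end Rel
section Master

variable {n m : ℕ} (S : SignedDigraph (Fin n)) (hadj : S.Adj = F1Adj n) (hn : n = m + 6)

include hadj hn

lemma arc_cases (u w : Fin n) (h : S.Adj u w) :
    (u.val = 0 ∧ w.val = n - 2) ∨ (u.val = 0 ∧ w.val = n - 3) ∨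
    (u.val = 1 ∧ w.val = 0) ∨ (u.val = 1 ∧ w.val = n - 1) ∨
    (∃ j, 1 ≤ j ∧ j + 3 ≤ n ∧ u.val = j + 1 ∧ w.val = j) ∨
    (u.val = n - 1 ∧ w.val = n - 2) := by
  rw [hadj] at h
  have hu := u.isLt
  have hw := w.isLt
  rcases h with ⟨h1, h2⟩ | ⟨h1, h2, h3⟩ | ⟨h1, h2⟩ | ⟨h1, h2⟩ | ⟨h1, h2⟩
  · exact Or.inl ⟨h1, h2⟩
  · rcases Nat.eq_or_lt_of_le h2 with h4 | h4
    · exact Or.inr (Or.inr (Or.inl ⟨by omega, by omega⟩))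
    · exact Or.inr (Or.inr (Or.inr (Or.inr (Or.inl ⟨w.val, by omega, by omega, by omega, rfl⟩))))
  · exact Or.inr (Or.inl ⟨h1, h2⟩)
  · exact Or.inr (Or.inr (Or.inr (Or.inl ⟨h1, h2⟩)))
  · exact Or.inr (Or.inr (Or.inr (Or.inr (Or.inr ⟨h1, h2⟩))))

lemma master (hRel : pa S * qa S = ya S * xa S 1) (t : ℕ) (f : ℕ → Fin n)
    (hf : IsWalk S.Adj t f) :
    ∃ s a10 a1n : ℕ,
      pf (f t) + (n - 1) * (a10 + a1n) = pf (f 0) + t + s ∧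
      S.walkSign t f = gg S (f 0) * gg S (f t) * s1v S ^ (a10 + a1n) * (s1v S * s2v S) ^ s ∧
      s ≤ a10 + (if (f 0).val = 0 then 1 else 0) ∧
      ((f t).val = 0 → s + 1 ≤ a10 + (if (f 0).val = 0 then 1 else 0)) ∧
      ((f t).val = n - 1 → 1 ≤ t → 1 ≤ a1n) := by
  induction t with
  | zero =>
      refine ⟨0, 0, 0, by omega, ?_, by split <;> omega, by split <;> omega, by omega⟩
      have : S.walkSign 0 f = 1 := by unfold SignedDigraph.walkSign; simp
      rw [this]
      linear_combination (- gg S (f 0) * gg S (f 0)) * 0 - (gg_unit S hadj hn (f 0))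
  | succ t ih =>
      obtain ⟨s, a10, a1n, hpf, hsgn, hc1, hc2, hc3⟩ := ih (fun i hi => hf i (by omega))
      have harc := hf t (by omega)
      have hws := walkSign_succ S t f
      rcases arc_cases S hadj hn _ _ harc with ⟨e1, e2⟩ | ⟨e1, e2⟩ | ⟨e1, e2⟩ | ⟨e1, e2⟩ |
        ⟨j, hj1, hj2, e1, e2⟩ | ⟨e1, e2⟩
      · -- 0 → n-2
        refine ⟨s, a10, a1n, ?_, ?_, hc1, by omega, by omega⟩
        · rw [pf_at0 hn _ (Or.inl e1)] at hpf
          rw [pf_mid hn _ (by omega) (by omega), e2]; omega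
        · rw [hws, hsgn, arcsgn_0n2 S hadj hn _ _ e1 e2]
          linear_combination (gg S (f 0) * gg S (f (t+1)) * s1v S ^ (a10 + a1n) *
            (s1v S * s2v S) ^ s) * (gg_unit S hadj hn (f t))
      · -- 0 → n-3 (shortcut)
        refine ⟨s + 1, a10, a1n, ?_, ?_, by omega, by omega, by omega⟩
        · rw [pf_at0 hn _ (Or.inl e1)] at hpf
          rw [pf_mid hn _ (by omega) (by omega), e2]; omega
        · rw [hws, hsgn, arcsgn_sc S hadj hn _ _ e1 e2, pow_succ]
          linear_combination (gg S (f 0) * gg S (f (t+1)) * s1v S ^ (a10 + a1n) *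
            (s1v S * s2v S) ^ s * (s1v S * s2v S)) * (gg_unit S hadj hn (f t))
      · -- 1 → 0 (wrap)
        refine ⟨s, a10 + 1, a1n, ?_, ?_, by omega, by omega, by omega⟩
        · rw [pf_mid hn _ (by omega) (by omega)] at hpf
          rw [pf_at0 hn _ (Or.inl e2)]
          have : (n-1)*(a10+1+a1n) = (n-1)*(a10+a1n) + (n-1) := by ring
          rw [e1] at hpf; omega
        · rw [hws, hsgn, arcsgn_10 S hadj hn _ _ e1 e2,
            show a10 + 1 + a1n = (a10 + a1n) + 1 from by omega, pow_succ]
          linear_combination (gg S (f 0) * gg S (f (t+1)) * s1v S ^ (a10 + a1n) * s1v S *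
            (s1v S * s2v S) ^ s) * (gg_unit S hadj hn (f t))
      · -- 1 → n-1 (wrap)
        refine ⟨s, a10, a1n + 1, ?_, ?_, by omega, by omega, by omega⟩
        · rw [pf_mid hn _ (by omega) (by omega)] at hpf
          rw [pf_at0 hn _ (Or.inr e2)]
          have : (n-1)*(a10+(a1n+1)) = (n-1)*(a10+a1n) + (n-1) := by ring
          rw [e1] at hpf; omega
        · rw [hws, hsgn, arcsgn_1n1 S hadj hn _ _ e1 e2,
            show a10 + (a1n + 1) = (a10 + a1n) + 1 from by omega, pow_succ]
          linear_combination (gg S (f 0) * gg S (f (t+1)) * s1v S ^ (a10 + a1n) * s1v S *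
            (s1v S * s2v S) ^ s) * (gg_unit S hadj hn (f t))
      · -- descending j+1 → j, 1 ≤ j
        refine ⟨s, a10, a1n, ?_, ?_, hc1, by omega, by omega⟩
        · rw [pf_mid hn _ (by omega) (by omega)] at hpf
          rw [pf_mid hn _ (by omega) (by omega), e2]
          rw [e1] at hpf; omega
        · rw [hws, hsgn, arcsgn_desc S hadj hn j _ _ hj1 (by omega) e1 e2]
          linear_combination (gg S (f 0) * gg S (f (t+1)) * s1v S ^ (a10 + a1n) *
            (s1v S * s2v S) ^ s) * (gg_unit S hadj hn (f t))
      · -- n-1 → n-2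
        refine ⟨s, a10, a1n, ?_, ?_, hc1, by omega, by omega⟩
        · rw [pf_at0 hn _ (Or.inr e1)] at hpf
          rw [pf_mid hn _ (by omega) (by omega), e2]; omega
        · rw [hws, hsgn, arcsgn_n1n2 S hadj hn hRel _ _ e1 e2]
          linear_combination (gg S (f 0) * gg S (f (t+1)) * s1v S ^ (a10 + a1n) *
            (s1v S * s2v S) ^ s) * (gg_unit S hadj hn (f t))

end Master
section Dneg

variable {n m : ℕ} (S : SignedDigraph (Fin n)) (hadj : S.Adj = F1Adj n) (hn : n = m + 6)

include hadj hn

lemma ss_unit : (s1v S * s2v S) * (s1v S * s2v S) = 1 := by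
  have h1 := s1v_unit S hadj hn
  have h2 := s2v_unit S hadj hn
  linear_combination (s2v S * s2v S) * h1 + h2

lemma Dneg (hRel : pa S * qa S = ya S * xa S 1) (hpn : S.IsPrimitiveNonpowerful) :
    s1v S ^ (n - 2) * s2v S ^ (n - 1) = -1 := by
  have h1 := s1v_unit S hadj hn
  have hss := ss_unit S hadj hn
  set X : ℤ := s1v S * (s1v S * s2v S) ^ (n - 1) with hXdef
  have hXX : X * X = 1 := by
    rw [hXdef, show s1v S * (s1v S * s2v S) ^ (n-1) * (s1v S * (s1v S * s2v S) ^ (n-1))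
      = (s1v S * s1v S) * ((s1v S * s2v S) ^ (n-1) * (s1v S * s2v S) ^ (n-1)) from by ring,
      ← mul_pow, hss, one_pow, h1]; ring
  have hgoalX : s1v S ^ (n - 2) * s2v S ^ (n - 1) = X := by
    rw [hXdef, mul_pow, show n - 1 = (n - 2) + 1 from by omega]
    simp only [pow_succ]
    linear_combination (- s1v S ^ (n-2) * s2v S ^ (n-2) * s2v S) * h1
  rw [hgoalX]
  -- get an SSSD pair and apply the master lemma to both walks
  obtain ⟨l, hl0, hl⟩ := hpn
  obtain ⟨F, G, ⟨hF0, hFl, hFw⟩, ⟨hG0, hGl, hGw⟩, hne⟩ :=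
    hl l le_rfl ⟨0, by omega⟩ ⟨0, by omega⟩
  obtain ⟨s, a10, a1n, hpf, hsgn, -, -, -⟩ := master S hadj hn hRel l F hFw
  obtain ⟨s', b10, b1n, hpf', hsgn', -, -, -⟩ := master S hadj hn hRel l G hGw
  rw [hsgn, hsgn'] at hne
  rw [hF0, hFl] at hne hpf
  rw [hG0, hGl] at hne hpf'
  set u : Fin n := (⟨0, by omega⟩ : Fin n) with hu
  set W := a10 + a1n with hW
  set W' := b10 + b1n with hW'
  -- common argument
  have key : ∀ w s_ w' s'_ : ℕ, w ≤ w' →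
      pf u + (n-1) * w = pf u + l + s_ → pf u + (n-1) * w' = pf u + l + s'_ →
      gg S u * gg S u * s1v S ^ w * (s1v S * s2v S) ^ s_ ≠
        gg S u * gg S u * s1v S ^ w' * (s1v S * s2v S) ^ s'_ →
      X = -1 := by
    intro w s_ w' s'_ hle heq heq' hne2
    set d := w' - w with hd
    have hw' : w' = w + d := by omega
    have hexp : (n-1) * w' = (n-1) * w + (n-1) * d := by rw [hw']; ring
    have hs' : s'_ = s_ + (n-1) * d := by omega
    have hXd : X ^ d ≠ 1 := by
      intro hXd1
      apply hne2
      rw [hw', hs']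
      simp only [pow_add, pow_mul]
      have hx : s1v S ^ d * ((s1v S * s2v S) ^ (n-1)) ^ d = 1 := by
        rw [← mul_pow]; exact hXd1
      linear_combination (-(gg S u * gg S u * s1v S ^ w * (s1v S * s2v S) ^ s_)) * hx
    rcases mul_self_eq_one_iff.mp hXX with hX1 | hX1
    · exact absurd (by rw [hX1, one_pow]) hXd
    · exact hX1
  rcases le_total W W' with hle | hle
  · exact key W s W' s' hle hpf hpf' hne
  · exact key W' s' W s hle hpf' hpf (Ne.symm hne)

end Dneg
section NumTheory

/-- every `x ≥ (m+4)(m+3)` is representable over `{m+5, m+4}`. -/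
lemma repA (m x : ℕ) (hx : (m+4)*(m+3) ≤ x) : ∃ a b : ℕ, x = a*(m+5) + b*(m+4) := by
  set y := x - (m+4)*(m+3) with hy
  have hx2 : x = (m+4)*(m+3) + y := by omega
  set r := y % (m+4) with hr
  set q := y / (m+4) with hq
  have hy2 : y = q * (m+4) + r := by rw [hq, hr]; linarith [Nat.div_add_mod y (m+4)]
  have hrlt : r < m + 4 := Nat.mod_lt _ (by omega)
  set d := m + 3 - r with hd
  have hrd : r + d = m + 3 := by omega
  refine ⟨r, d + q, ?_⟩
  have hx3 : x = (m+4)*(m+3) + q*(m+4) + r := by omega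
  zify at hx3 hrd ⊢
  linear_combination hx3 - ((m:ℤ)+4) * hrd
  
/-- for `x ≥ m²+6m+7`, `x` or `x+1` is representable over `{m+5, m+4}`. -/
lemma repB (m x : ℕ) (hx : m*m + 6*m + 7 ≤ x) :
    (∃ a b : ℕ, x = a*(m+5) + b*(m+4)) ∨ (∃ a b : ℕ, x + 1 = a*(m+5) + b*(m+4)) := by
  set r := x % (m+4) with hr
  set q := x / (m+4) with hq
  have hx2 : x = q * (m+4) + r := by rw [hq, hr]; linarith [Nat.div_add_mod x (m+4)]
  have hrlt : r < m + 4 := Nat.mod_lt _ (by omega)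
  rcases le_or_gt r q with hle | hlt
  · left
    set e := q - r with he
    have hre : r + e = q := by omega
    refine ⟨r, e, ?_⟩
    zify at hx2 hre ⊢
    linear_combination hx2 - ((m:ℤ)+4) * hre
  · rcases Nat.eq_or_lt_of_le (show r ≤ m + 3 by omega) with h3 | h3
    · right
      refine ⟨0, q + 1, ?_⟩
      zify at hx2 ⊢
      have hr3 : (r:ℤ) = (m:ℤ)+3 := by exact_mod_cast h3
      linear_combination hx2 + hr3
    · -- impossible : x would be too small
      exfalso
      have hq2 : q ≤ m + 1 := by omega
      have := Nat.mul_le_mul_right (m+4) hq2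
      have hr2 : r ≤ m + 2 := by omega
      nlinarith
      
end NumTheory
section Constructions

variable {n m : ℕ} (S : SignedDigraph (Fin n)) (hadj : S.Adj = F1Adj n) (hn : n = m + 6)

include hadj hn

lemma arc_swu (u v : Fin n) (h : S.Adj u v) : ∃ σ : ℤ, σ * σ = 1 ∧ HasSW S 1 u v σ := by
  refine ⟨S.sgn u v, ?_, hasSW_arc S h⟩
  rcases S.sgn_unit u v h with h' | h' <;> rw [h'] <;> norm_num

lemma desc_walk (d : ℕ) : ∀ u v : Fin n, u.val ≤ n - 2 → u.val = v.val + d →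
    ∃ σ : ℤ, σ * σ = 1 ∧ HasSW S d u v σ := by
  induction d with
  | zero =>
      intro u v hu he
      exact ⟨1, by norm_num, by rw [show u = v from Fin.ext (by omega)]; exact hasSW_refl S v⟩
  | succ d ih =>
      intro u v hu he
      set w : Fin n := ⟨v.val + d, by omega⟩ with hw
      have hwv : w.val = v.val + d := rfl
      have harc : S.Adj u w := by
        rw [hadj]; exact Or.inr (Or.inl ⟨by omega, by omega, by omega⟩)
      obtain ⟨σ1, hσ1, h1⟩ := arc_swu S hadj hn u w harc
      obtain ⟨σ2, hσ2, h2⟩ := ih w v (by omega) (by omega)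
      refine ⟨σ1 * σ2, by linear_combination (σ2*σ2) * hσ1 + hσ2, ?_⟩
      have := hasSW_concat S h1 h2
      rwa [show 1 + d = d + 1 from by omega] at this

/-- the `(n-1)`-loop at vertex `0`, with sign `s1v`. -/
lemma loop1 : HasSW S (n - 1) ⟨0, by omega⟩ ⟨0, by omega⟩ (s1v S) := by
  set f : ℕ → Fin n := fun i => ⟨if i = 0 ∨ n - 1 ≤ i then 0 else n - 1 - i, by split <;> omega⟩
    with hf
  have hfv : ∀ i, (f i).val = if i = 0 ∨ n - 1 ≤ i then 0 else n - 1 - i := fun i => rfl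
  refine ⟨f, by apply Fin.ext; rw [hfv]; simp, by apply Fin.ext; rw [hfv]; simp, ?_, ?_⟩
  · intro i hi
    rw [hadj]
    rcases Nat.eq_zero_or_pos i with h0 | h0
    · subst h0
      have e2 : (f (0+1)).val = n - 2 := by rw [hfv]; rw [if_neg (by omega)]; omega
      exact Or.inl ⟨by rw [hfv]; simp, by omega⟩
    · have e1 : (f i).val = n - 1 - i := by rw [hfv]; rw [if_neg (by omega)]
      have e2 : (f (i+1)).val = n - 2 - i := by rw [hfv]; split <;> omega
      exact Or.inr (Or.inl ⟨by omega, by omega, by omega⟩)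
  · unfold SignedDigraph.walkSign
    rw [show n - 1 = (n - 2) + 1 from by omega, Finset.prod_range_succ']
    have h0 : S.sgn (f 0) (f (0+1)) = ya S := by
      refine sgn_eq_ya S hn _ _ (by rw [hfv]; simp) ?_
      rw [hfv]; rw [if_neg (by omega)]; omega
    have hmid : ∀ i ∈ Finset.range (n-2), S.sgn (f (i+1)) (f (i+1+1)) = xa S (n-2-i) := by
      intro i hi; simp only [Finset.mem_range] at hi
      refine sgn_eq_xa S hn (n-2-i) _ _ (by omega) (by omega) ?_ ?_
      · rw [hfv]; rw [if_neg (by omega)]; omega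
      · rw [hfv]; split <;> omega
    rw [Finset.prod_congr rfl hmid, h0]
    rw [mul_comm]; unfold s1v; congr 1
    unfold Rr
    rw [← Finset.prod_range_reflect (fun j => xa S (j+1)) (n-2)]
    refine Finset.prod_congr rfl fun i hi => ?_
    simp only [Finset.mem_range] at hi
    congr 1; omega

/-- the `(n-2)`-loop at vertex `0` (via the shortcut), with sign `s2v`. -/
lemma loop2 : HasSW S (n - 2) ⟨0, by omega⟩ ⟨0, by omega⟩ (s2v S) := by
  set f : ℕ → Fin n := fun i => ⟨if i = 0 ∨ n - 2 ≤ i then 0 else n - 2 - i, by split <;> omega⟩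
    with hf
  have hfv : ∀ i, (f i).val = if i = 0 ∨ n - 2 ≤ i then 0 else n - 2 - i := fun i => rfl
  refine ⟨f, by apply Fin.ext; rw [hfv]; simp, by apply Fin.ext; rw [hfv]; simp, ?_, ?_⟩
  · intro i hi
    rw [hadj]
    rcases Nat.eq_zero_or_pos i with h0 | h0
    · subst h0
      have e2 : (f (0+1)).val = n - 3 := by rw [hfv]; rw [if_neg (by omega)]; omega
      exact Or.inr (Or.inr (Or.inl ⟨by rw [hfv]; simp, by omega⟩))
    · have e1 : (f i).val = n - 2 - i := by rw [hfv]; rw [if_neg (by omega)]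
      have e2 : (f (i+1)).val = n - 3 - i := by rw [hfv]; split <;> omega
      exact Or.inr (Or.inl ⟨by omega, by omega, by omega⟩)
  · unfold SignedDigraph.walkSign
    rw [show n - 2 = (n - 3) + 1 from by omega, Finset.prod_range_succ']
    have h0 : S.sgn (f 0) (f (0+1)) = za S := by
      refine sgn_eq_za S hn _ _ (by rw [hfv]; simp) ?_
      rw [hfv]; rw [if_neg (by omega)]; omega
    have hmid : ∀ i ∈ Finset.range (n-3), S.sgn (f (i+1)) (f (i+1+1)) = xa S (n-3-i) := by
      intro i hi; simp only [Finset.mem_range] at hi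
      refine sgn_eq_xa S hn (n-3-i) _ _ (by omega) (by omega) ?_ ?_
      · rw [hfv]; rw [if_neg (by omega)]; omega
      · rw [hfv]; split <;> omega
    rw [Finset.prod_congr rfl hmid, h0]
    rw [mul_comm]; unfold s2v; congr 1
    unfold Rr
    rw [← Finset.prod_range_reflect (fun j => xa S (j+1)) (n-3)]
    refine Finset.prod_congr rfl fun i hi => ?_
    simp only [Finset.mem_range] at hi
    congr 1; omega

/-- closed walks at `0` of all lengths in the numerical semigroup. -/
lemma loops (a b : ℕ) :
    HasSW S (a * (n-1) + b * (n-2)) ⟨0, by omega⟩ ⟨0, by omega⟩ (s1v S ^ a * s2v S ^ b) :=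
  hasSW_concat S (hasSW_pow S (loop1 S hadj hn) a) (hasSW_pow S (loop2 S hadj hn) b)

/-- a path from any `u` down to `0`, of length `u.val`. -/
lemma path_to0 (u : Fin n) : ∃ σ : ℤ, σ * σ = 1 ∧ HasSW S u.val u ⟨0, by omega⟩ σ := by
  rcases le_or_gt u.val (n - 2) with h | h
  · exact desc_walk S hadj hn u.val u ⟨0, by omega⟩ h (by simp)
  · -- u.val = n-1
    have hu : u.val = n - 1 := by have := u.isLt; omega
    have harc : S.Adj u ⟨n-2, by omega⟩ := by
      rw [hadj]; exact Or.inr (Or.inr (Or.inr (Or.inr ⟨hu, by simp⟩)))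
    obtain ⟨σ1, hσ1, h1⟩ := arc_swu S hadj hn u _ harc
    obtain ⟨σ2, hσ2, h2⟩ := desc_walk S hadj hn (n-2) ⟨n-2, by omega⟩ ⟨0, by omega⟩
      (by simp) (by simp)
    refine ⟨σ1 * σ2, by linear_combination (σ2*σ2) * hσ1 + hσ2, ?_⟩
    have := hasSW_concat S h1 h2
    rwa [show 1 + (n-2) = u.val from by omega] at this

end Constructions
set_option maxHeartbeats 2000000

section Upper

variable {n m : ℕ} (S : SignedDigraph (Fin n)) (hadj : S.Adj = F1Adj n) (hn : n = m + 6)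

lemma unit_mul {a b : ℤ} (ha : a * a = 1) (hb : b * b = 1) : (a * b) * (a * b) = 1 := by
  linear_combination (b * b) * ha + hb

include hadj hn

lemma upper (hD : s1v S ^ (n-2) * s2v S ^ (n-1) = -1) (u v : Fin n) (t : ℕ)
    (ht : 2*(m+4)^2 + u.val + 1 ≤ t) : S.HasSSSD t u v := by
  have h5 : n - 1 = m + 5 := by omega
  have h4 : n - 2 = m + 4 := by omega
  have h45 : (n-2)*(n-1) = (m+4)*(m+5) := by rw [h4, h5]
  have hun : u.val ≤ m + 5 := by have := u.isLt; omega
  obtain ⟨σ, hσ, hP⟩ := path_to0 S hadj hn u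
  have combo : ∀ (e : ℕ) (τ : ℤ), τ * τ = 1 → HasSW S e (⟨0, by omega⟩ : Fin n) v τ →
      ∀ a b : ℕ, t = u.val + (a*(n-1) + b*(n-2)) + ((n-2)*(n-1)) + e → S.HasSSSD t u v := by
    intro e τ hτ hQ a b hrep
    have mid1 : HasSW S ((n-2)*(n-1)) ⟨0, by omega⟩ ⟨0, by omega⟩ (s1v S ^ (n-2)) :=
      hasSW_pow S (loop1 S hadj hn) (n-2)
    have mid2 : HasSW S ((n-1)*(n-2)) ⟨0, by omega⟩ ⟨0, by omega⟩ (s2v S ^ (n-1)) :=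
      hasSW_pow S (loop2 S hadj hn) (n-1)
    rw [show (n-1)*(n-2) = (n-2)*(n-1) from Nat.mul_comm _ _] at mid2
    have wA := hasSW_concat S (hasSW_concat S (hasSW_concat S hP (loops S hadj hn a b)) mid1) hQ
    have wB := hasSW_concat S (hasSW_concat S (hasSW_concat S hP (loops S hadj hn a b)) mid2) hQ
    rw [← hrep] at wA wB
    refine hasSSSD_of_two S wA wB ?_
    intro hcontra
    have hAA : (s1v S ^ a * s2v S ^ b) * (s1v S ^ a * s2v S ^ b) = 1 := by
      have e1 : s1v S ^ a * s1v S ^ a = 1 := by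
        rw [← mul_pow, s1v_unit S hadj hn, one_pow]
      have e2 : s2v S ^ b * s2v S ^ b = 1 := by
        rw [← mul_pow, s2v_unit S hadj hn, one_pow]
      linear_combination (s2v S ^ b * s2v S ^ b) * e1 + e2
    have hkey : s1v S ^ (n-2) = s2v S ^ (n-1) := by
      linear_combination (σ * (s1v S ^ a * s2v S ^ b) * τ) * hcontra
        - ((s1v S ^ (n-2) - s2v S ^ (n-1)) * ((s1v S ^ a * s2v S ^ b) *
            (s1v S ^ a * s2v S ^ b)) * (τ * τ)) * hσ
        - ((s1v S ^ (n-2) - s2v S ^ (n-1)) * (τ * τ)) * hAA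
        - (s1v S ^ (n-2) - s2v S ^ (n-1)) * hτ
    have h2 : s2v S ^ (n-1) * s2v S ^ (n-1) = 1 := by
      rw [← mul_pow, s2v_unit S hadj hn, one_pow]
    rw [hkey, h2] at hD
    norm_num at hD
  have hv := v.isLt
  by_cases hv0 : v.val = 0
  · -- v = 0
    have hge : u.val + (n-2)*(n-1) ≤ t := by rw [h45]; nlinarith
    set x := t - (u.val + (n-2)*(n-1)) with hx
    have hxeq : t = u.val + (n-2)*(n-1) + x := by omega
    rw [h45] at hxeq
    obtain ⟨a, b, hab⟩ := repA m x (by nlinarith)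
    refine combo 0 1 (by norm_num) ?_ a b ?_
    · rw [show (⟨0, by omega⟩ : Fin n) = v from Fin.ext (by simp [hv0])]
      exact hasSW_refl S v
    · rw [h4, h5]; linarith
  · by_cases hvn2 : v.val = n - 2
    · -- v = n-2 : single arc from 0
      have harc : S.Adj ⟨0, by omega⟩ v := by
        rw [hadj]; exact Or.inl ⟨rfl, hvn2⟩
      obtain ⟨τ, hτ, hQ⟩ := arc_swu S hadj hn _ _ harc
      have hge : u.val + (n-2)*(n-1) + 1 ≤ t := by rw [h45]; nlinarith
      set x := t - (u.val + (n-2)*(n-1) + 1) with hx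
      have hxeq : t = u.val + (n-2)*(n-1) + 1 + x := by omega
      rw [h45] at hxeq
      obtain ⟨a, b, hab⟩ := repA m x (by nlinarith)
      refine combo 1 τ hτ hQ a b ?_
      rw [h4, h5]; linarith
    · by_cases hvn1 : v.val = n - 1
      · -- v = n-1 : two paths of lengths n-2 and n-1
        have harc2 : S.Adj (⟨1, by omega⟩ : Fin n) v := by
          rw [hadj]; exact Or.inr (Or.inr (Or.inr (Or.inl ⟨rfl, hvn1⟩)))
        obtain ⟨τ2, hτ2, hQ2⟩ := arc_swu S hadj hn _ _ harc2
        -- path A of length n-2 : 0 → n-3 → ⋯ → 1 → n-1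
        have harcA : S.Adj (⟨0, by omega⟩ : Fin n) ⟨n-3, by omega⟩ := by
          rw [hadj]; exact Or.inr (Or.inr (Or.inl ⟨rfl, rfl⟩))
        obtain ⟨τA, hτA, hQA⟩ := arc_swu S hadj hn _ _ harcA
        obtain ⟨τA2, hτA2, hQA2⟩ := desc_walk S hadj hn (n-4) ⟨n-3, by omega⟩ ⟨1, by omega⟩
          (by simp; omega) (by simp; omega)
        have pathA := hasSW_concat S (hasSW_concat S hQA hQA2) hQ2
        rw [show 1 + (n-4) + 1 = n - 2 from by omega] at pathA
        -- path B of length n-1 : 0 → n-2 → ⋯ → 1 → n-1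
        have harcB : S.Adj (⟨0, by omega⟩ : Fin n) ⟨n-2, by omega⟩ := by
          rw [hadj]; exact Or.inl ⟨rfl, rfl⟩
        obtain ⟨τB, hτB, hQB⟩ := arc_swu S hadj hn _ _ harcB
        obtain ⟨τB2, hτB2, hQB2⟩ := desc_walk S hadj hn (n-3) ⟨n-2, by omega⟩ ⟨1, by omega⟩
          (by simp) (by simp; omega)
        have pathB := hasSW_concat S (hasSW_concat S hQB hQB2) hQ2
        rw [show 1 + (n-3) + 1 = n - 1 from by omega] at pathB
        have hge : u.val + (n-2)*(n-1) + (n-1) ≤ t := by rw [h45, h5]; nlinarith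
        set x := t - (u.val + (n-2)*(n-1) + (n-1)) with hx
        have hxeq : t = u.val + (n-2)*(n-1) + (n-1) + x := by omega
        rw [h45, h5] at hxeq
        rcases repB m x (by nlinarith) with ⟨a, b, hab⟩ | ⟨a, b, hab⟩
        · refine combo (n-1) (τB * τB2 * τ2)
            (unit_mul (unit_mul hτB hτB2) hτ2) pathB a b ?_
          rw [h4, h5]; linarith
        · refine combo (n-2) (τA * τA2 * τ2)
            (unit_mul (unit_mul hτA hτA2) hτ2) pathA a b ?_
          rw [h4, h5]; linarith
      · -- 1 ≤ v.val ≤ n-3 : two paths of lengths n-2-j and n-1-j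
        have hj1 : 1 ≤ v.val := by omega
        have hj3 : v.val ≤ n - 3 := by omega
        -- path A of length n-2-j : 0 → n-3 → ⋯ → j
        have harcA : S.Adj (⟨0, by omega⟩ : Fin n) ⟨n-3, by omega⟩ := by
          rw [hadj]; exact Or.inr (Or.inr (Or.inl ⟨rfl, rfl⟩))
        obtain ⟨τA, hτA, hQA⟩ := arc_swu S hadj hn _ _ harcA
        obtain ⟨τA2, hτA2, hQA2⟩ := desc_walk S hadj hn (n-3-v.val) ⟨n-3, by omega⟩ v
          (by simp; omega) (by simp; omega)
        have pathA := hasSW_concat S hQA hQA2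
        rw [show 1 + (n-3-v.val) = n - 2 - v.val from by omega] at pathA
        -- path B of length n-1-j : 0 → n-2 → ⋯ → j
        have harcB : S.Adj (⟨0, by omega⟩ : Fin n) ⟨n-2, by omega⟩ := by
          rw [hadj]; exact Or.inl ⟨rfl, rfl⟩
        obtain ⟨τB, hτB, hQB⟩ := arc_swu S hadj hn _ _ harcB
        obtain ⟨τB2, hτB2, hQB2⟩ := desc_walk S hadj hn (n-2-v.val) ⟨n-2, by omega⟩ v
          (by simp) (by simp; omega)
        have pathB := hasSW_concat S hQB hQB2
        rw [show 1 + (n-2-v.val) = n - 1 - v.val from by omega] at pathB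
        have hge : u.val + (n-2)*(n-1) + (n-1-v.val) ≤ t := by
          have hj : n - 1 - v.val ≤ m + 4 := by omega
          rw [h45]; nlinarith [hj]
        set x := t - (u.val + (n-2)*(n-1) + (n-1-v.val)) with hx
        have hxeq : t = u.val + (n-2)*(n-1) + (n-1-v.val) + x := by omega
        rw [h45, h5] at hxeq
        have hjj : m + 5 - v.val + v.val = m + 5 := by omega
        have hjj2 : m + 4 - v.val + v.val = m + 4 := by omega
        have hxlb : m*m + 6*m + 7 ≤ x := by nlinarith
        rcases repB m x hxlb with ⟨a, b, hab⟩ | ⟨a, b, hab⟩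
        · refine combo (n-1-v.val) (τB * τB2) (unit_mul hτB hτB2) pathB a b ?_
          rw [h4, h5]; linarith
        · refine combo (n-2-v.val) (τA * τA2) (unit_mul hτA hτA2) pathA a b ?_
          rw [h4, h5]; linarith

end Upper
section Lower

variable {n m : ℕ} (S : SignedDigraph (Fin n)) (hadj : S.Adj = F1Adj n) (hn : n = m + 6)

lemma uniq_mid (W s : ℕ) (heq : (m+5) * W = (m+4) * (2*m+9) + s) (hs : s + 1 ≤ W) :
    W = 2*m+8 ∧ s = m+4 := by
  have hWle : W ≤ 2*m+8 := by
    by_contra h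
    push_neg at h
    have h2 : (m+4) * (2*m+9) ≤ (m+4) * W := Nat.mul_le_mul_left _ (by omega)
    nlinarith
  have hWge : 2*m+8 ≤ W := by
    by_contra h
    push_neg at h
    have h2 : (m+5) * W ≤ (m+5) * (2*m+7) := Nat.mul_le_mul_left _ (by omega)
    nlinarith
  have hW : W = 2*m+8 := by omega
  rw [hW] at heq
  constructor
  · exact hW
  · nlinarith

lemma uniq_zero (W s : ℕ) (heq : (m+5) * W + 1 = 2*(m+4)^2 + s) (hs : s ≤ W) :
    W = 2*m+7 ∧ s = m+4 := by
  have hWle : W ≤ 2*m+7 := by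
    by_contra h
    push_neg at h
    have h2 : (m+4) * (2*m+8) ≤ (m+4) * W := Nat.mul_le_mul_left _ (by omega)
    nlinarith
  have hWge : 2*m+7 ≤ W := by
    by_contra h
    push_neg at h
    have h2 : (m+5) * W ≤ (m+5) * (2*m+6) := Nat.mul_le_mul_left _ (by omega)
    nlinarith
  have hW : W = 2*m+7 := by omega
  rw [hW] at heq
  exact ⟨hW, by nlinarith⟩


include hadj hn

lemma into_n2 (w v : Fin n) (h : S.Adj w v) (hv : v.val = n - 2) :
    w.val = 0 ∨ w.val = n - 1 := by
  rcases arc_cases S hadj hn w v h with ⟨e1, e2⟩ | ⟨e1, e2⟩ | ⟨e1, e2⟩ | ⟨e1, e2⟩ |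
    ⟨j, hj1, hj2, e1, e2⟩ | ⟨e1, e2⟩ <;> omega

lemma lb_form (hRel : pa S * qa S = ya S * xa S 1) (t : ℕ) (f : ℕ → Fin n)
    (hf : IsWalk S.Adj (t + 2) f) (hend : (f (t + 2)).val = n - 2) :
    ∃ s W : ℕ,
      1 + (n - 1) * W = pf (f 0) + (t + 2) + s ∧
      S.walkSign (t + 2) f =
        gg S (f 0) * gg S (f (t + 2)) * s1v S ^ W * (s1v S * s2v S) ^ s ∧
      s + 1 ≤ W + (if (f 0).val = 0 then 1 else 0) := by
  obtain ⟨s, a10, a1n, hpf, hsgn, hc1, hc2, hc3⟩ :=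
    master S hadj hn hRel (t + 1) f (fun i hi => hf i (by omega))
  have harc : S.Adj (f (t+1)) (f (t+2)) := hf (t+1) (by omega)
  have hws := walkSign_succ S (t+1) f
  rcases into_n2 S hadj hn _ _ harc hend with h0 | h0
  · -- previous vertex is 0
    refine ⟨s, a10 + a1n, ?_, ?_, ?_⟩
    · rw [pf_at0 hn _ (Or.inl h0)] at hpf; omega
    · rw [hws, hsgn, arcsgn_0n2 S hadj hn _ _ h0 hend]
      linear_combination (gg S (f 0) * gg S (f (t+2)) * s1v S ^ (a10 + a1n) *
        (s1v S * s2v S) ^ s) * (gg_unit S hadj hn (f (t+1)))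
    · have := hc2 h0; omega
  · -- previous vertex is n-1
    refine ⟨s, a10 + a1n, ?_, ?_, ?_⟩
    · rw [pf_at0 hn _ (Or.inr h0)] at hpf; omega
    · rw [hws, hsgn, arcsgn_n1n2 S hadj hn hRel _ _ h0 hend]
      linear_combination (gg S (f 0) * gg S (f (t+2)) * s1v S ^ (a10 + a1n) *
        (s1v S * s2v S) ^ s) * (gg_unit S hadj hn (f (t+1)))
    · have := hc3 h0 (by omega); omega

/-- uniqueness of the `(W, s)` class at the critical length. -/
lemma lower (hRel : pa S * qa S = ya S * xa S 1) (u : Fin n) :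
    ¬ S.HasSSSD (2*(m+4)^2 + u.val) u ⟨n - 2, by omega⟩ := by
  intro ⟨F, G, ⟨hF0, hFt, hFw⟩, ⟨hG0, hGt, hGw⟩, hne⟩
  have hsq : 32 ≤ 2*(m+4)^2 := by nlinarith
  obtain ⟨t', ht'⟩ : ∃ t', 2*(m+4)^2 + u.val = t' + 2 := ⟨2*(m+4)^2 + u.val - 2, by omega⟩
  rw [ht'] at hFw hGw hFt hGt hne
  have hFe : (F (t'+2)).val = n - 2 := by rw [hFt]
  have hGe : (G (t'+2)).val = n - 2 := by rw [hGt]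
  obtain ⟨s, W, he1, hs1, hc1⟩ := lb_form S hadj hn hRel t' F hFw hFe
  obtain ⟨s', W', he2, hs2, hc2⟩ := lb_form S hadj hn hRel t' G hGw hGe
  rw [hF0] at he1 hs1 hc1
  rw [hG0] at he2 hs2 hc2
  rw [hFt] at hs1
  rw [hGt] at hs2
  -- establish s = s' and W = W'
  have h5 : n - 1 = m + 5 := by omega
  have hmain : W = W' ∧ s = s' := by
    by_cases hu0 : u.val = 0
    · rw [pf_at0 hn u (Or.inl hu0)] at he1 he2
      rw [if_pos hu0] at hc1 hc2
      rw [h5] at he1 he2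
      have e1 : (m+5) * W + 1 = 2*(m+4)^2 + s := by omega
      have e2 : (m+5) * W' + 1 = 2*(m+4)^2 + s' := by omega
      obtain ⟨hw1, hs1'⟩ := uniq_zero W s e1 (by omega)
      obtain ⟨hw2, hs2'⟩ := uniq_zero W' s' e2 (by omega)
      omega
    · have hpfu : pf u + u.val = n - 1 := by
        rcases Nat.eq_or_lt_of_le (Nat.le_of_lt_succ (by have := u.isLt; omega) :
          u.val ≤ n - 1) with h | h
        · rw [pf_at0 hn u (Or.inr h)]; omega
        · rw [pf_mid hn u (by omega) (by omega)]; omega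
      rw [if_neg hu0] at hc1 hc2
      rw [h5] at he1 he2 hpfu
      have e1 : (m+5) * W = (m+4) * (2*m+9) + s := by linarith [he1, hpfu, ht']
      have e2 : (m+5) * W' = (m+4) * (2*m+9) + s' := by linarith [he2, hpfu, ht']
      obtain ⟨hw1, hs1'⟩ := uniq_mid W s e1 (by omega)
      obtain ⟨hw2, hs2'⟩ := uniq_mid W' s' e2 (by omega)
      omega
  obtain ⟨hWW, hss⟩ := hmain
  rw [hs1, hs2, hWW, hss] at hne
  exact hne rfl

end Lower
section Final

lemma kth_affine (N C k : ℕ) (hk1 : 1 ≤ k) (hk2 : k ≤ N) :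
    kthSmallest (fun u : Fin N => C + u.val + 1) k = C + (k - 1) + 1 := by
  unfold kthSmallest
  set f : Fin N → ℕ := fun u => C + u.val + 1 with hf
  rw [Fin.univ_val_map]
  have hsorted : (List.ofFn f).Pairwise (· ≤ ·) := by
    rw [← List.sortedLE_iff_pairwise, List.sortedLE_ofFn_iff]
    intro a b hab
    simp only [hf]
    omega
  have hperm : Multiset.sort (↑(List.ofFn f) : Multiset ℕ) (· ≤ ·) = List.ofFn f := by
    apply List.Perm.eq_of_pairwise' (Multiset.pairwise_sort _ _) hsorted
      (Multiset.coe_eq_coe.mp (Multiset.sort_eq _ _))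
  rw [hperm]
  rw [List.getD_eq_getElem _ _ (by rw [List.length_ofFn]; omega), List.getElem_ofFn]

variable {n m : ℕ} (S : SignedDigraph (Fin n)) (hadj : S.Adj = F1Adj n) (hn : n = m + 6)

include hadj hn

lemma base_val (hRel : pa S * qa S = ya S * xa S 1)
    (hD : s1v S ^ (n-2) * s2v S ^ (n-1) = -1) (u : Fin n) :
    S.localBase u = 2*(m+4)^2 + u.val + 1 := by
  unfold SignedDigraph.localBase
  have hmem : (2*(m+4)^2 + u.val + 1) ∈ {l : ℕ | ∀ t ≥ l, ∀ v : Fin n, S.HasSSSD t u v} :=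
    fun t ht v => upper S hadj hn hD u v t ht
  refine le_antisymm (Nat.sInf_le hmem) (le_csInf ⟨_, hmem⟩ ?_)
  intro b hb
  by_contra h
  push_neg at h
  exact lower S hadj hn hRel u (hb (2*(m+4)^2 + u.val) (by omega) ⟨n - 2, by omega⟩)

end Final

end Stmt5Aux

/-- Let `n ≥ 6` and let `𝒮₁` be a primitive nonpowerful signed
digraph with underlying digraph `F₁`, in which all cycles of length `n-1` have
the same sign and all cycles of length `n-2` have the same sign. Then
`l(k) = l(v_k) = 2n²-8n+8+k` for every `1 ≤ k ≤ n`. -/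
theorem stmt5 (n : ℕ) (hn : 6 ≤ n)
    (S : SignedDigraph (Fin n)) (hadj : S.Adj = F1Adj n)
    (hpn : S.IsPrimitiveNonpowerful)
    (h1 : S.SameSignCycles (n - 1)) (h2 : S.SameSignCycles (n - 2)) :
    ∀ k : ℕ, ∀ _hk1 : 1 ≤ k, ∀ _hk2 : k ≤ n,
      kthSmallest S.localBase k = S.localBase ⟨k - 1, by omega⟩ ∧
      S.localBase ⟨k - 1, by omega⟩ = 2 * n ^ 2 - 8 * n + 8 + k := by
  intro k hk1 hk2
  obtain ⟨m, hm⟩ : ∃ m, n = m + 6 := ⟨n - 6, by omega⟩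
  have hRel := Stmt5Aux.key_relation S hadj hm h1
  have hD := Stmt5Aux.Dneg S hadj hm hRel hpn
  have hbase := Stmt5Aux.base_val S hadj hm hRel hD
  have hfeq : S.localBase = fun u : Fin n => 2*(m+4)^2 + u.val + 1 := funext hbase
  have hval : S.localBase ⟨k - 1, by omega⟩ = 2*(m+4)^2 + (k-1) + 1 := hbase _
  constructor
  · rw [hval, hfeq]
    have := Stmt5Aux.kth_affine n (2*(m+4)^2) k hk1 hk2
    rw [hm] at this ⊢
    exact this
  · rw [hval, hm]
    have e2 : (m+4)^2 = m^2 + 8*m + 16 := by ring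
    have e3 : (m+6)^2 = m^2 + 12*m + 36 := by ring
    omega
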